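/- At an endemic equilibrium of the rescaled dengue model, the exposed host fraction satisfies e_h* = (Γ_h Γ_v Δ_i − M)/(Δ_i − Δ_v), where Γ_h, Γ_v, Δ_i, Δ_v, M are the parameter combinations below; in particular a positive endemic value exists iff Γ_h Γ_v Δ_i > M and Δ_i > Δ_v (or both inequalities reversed). -/

import Mathlib

/-- At an endemic equilibrium, the exposed host fraction equals
`(Γ_h Γ_v Δ_i − M)/(Δ_i − Δ_v)`; a positive endemic value exists iff
`Γ_h Γ_v Δ_i > M` and `Δ_i > Δ_v`, or both inequalities are reversed. -/
theorem endemic_equilibrium_eh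
    (μh μv βhv βvh αh αv γ δ p η : ℝ)
    (hμh : 0 < μh) (hμv : 0 < μv) (hβhv : 0 < βhv) (hβvh : 0 < βvh)
    (hαh : 0 < αh) (hαv : 0 < αv) (hγ : 0 < γ) (hδ : 0 < δ)
    (hp : p ∈ Set.Icc (0:ℝ) 1) (hη : η ∈ Set.Icc (0:ℝ) 1)
    (Γh Γv Δi Δv M : ℝ)
    (hΓh : Γh = βhv * μh * αv / (μh + αh))
    (hΓv : Γv = βvh * μv / (μv + αv))
    (hΔi : Δi = (1 - p) * αh * (μh + γ) + (1 - η) * p * αh * (μh + γ + δ) +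
      (1 - η) * δ * (1 - p) * αh)
    (hΔv : Δv = η * μv * αh * (μh + γ + δ) + η * μv * δ * (1 - p) * αh)
    (hM : M = μv * (μh + γ) * (μh + γ + δ))
    (hne : Δi ≠ Δv) :
    (∀ e : ℝ, e ≠ 0 → M + e * (Δi - Δv) ≠ 0 →
        e = Γh * Γv * Δi * e / (M + e * (Δi - Δv)) →
        e = (Γh * Γv * Δi - M) / (Δi - Δv)) ∧
    (0 < (Γh * Γv * Δi - M) / (Δi - Δv) ↔
        (Γh * Γv * Δi > M ∧ Δi > Δv) ∨ (Γh * Γv * Δi < M ∧ Δi < Δv)) := by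
  constructor
  · intro e he hden heq
    have hd : Δi - Δv ≠ 0 := sub_ne_zero.mpr hne
    have h1 : e * (M + e * (Δi - Δv)) = Γh * Γv * Δi * e := by
      field_simp at heq
      rw [heq]; ring
    have h2 : M + e * (Δi - Δv) = Γh * Γv * Δi := by
      have h3 : (M + e * (Δi - Δv)) * e = Γh * Γv * Δi * e := by linarith [h1, mul_comm e (M + e * (Δi - Δv))]
      exact mul_right_cancel₀ he h3
    rw [eq_div_iff hd]
    linarith [h2]
  · rw [div_pos_iff]
    constructor
    · rintro (⟨h1, h2⟩ | ⟨h1, h2⟩)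
      · exact Or.inl ⟨by linarith, by linarith⟩
      · exact Or.inr ⟨by linarith, by linarith⟩
    · rintro (⟨h1, h2⟩ | ⟨h1, h2⟩)
      · exact Or.inl ⟨by linarith, by linarith⟩
      · exact Or.inr ⟨by linarith, by linarith⟩
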